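/- In R = 𝔽₂[t₁,t₂,t₃], write ρ_a = Σ_{i∈a} t_i for nonempty a ⊆ {1,2,3}. Consider the three quadruples A₁ = (ρ₁, ρ₂, ρ₃, ρ₁₂₃), A₂ = (ρ₁, ρ₁₂, ρ₂₃, ρ₃), A₃ = (ρ₂, ρ₁₂, ρ₂₃, ρ₁₂₃). Then for every symmetric polynomial f over 𝔽₂ in 4 variables, the element Σ_{i=1}^{3} f(A_i)/σ₄(A_i) of the field of fractions K of R lies in the image of R in K. -/

import Mathlib

open MvPolynomial

noncomputable section

/-- The polynomial ring `R = 𝔽₂[t₁,t₂,t₃]`. -/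
abbrev R3 : Type := MvPolynomial (Fin 3) (ZMod 2)

/-- The field of fractions `K` of `R`. -/
abbrev K3 : Type := FractionRing R3

/-- The canonical map `R → K`. -/
def toK3 : R3 →+* K3 := algebraMap _ _

/-- `ρ₁ = t₁`. -/ def r1 : R3 := X 0
/-- `ρ₂ = t₂`. -/ def r2 : R3 := X 1
/-- `ρ₃ = t₃`. -/ def r3 : R3 := X 2
/-- `ρ₁₂ = t₁ + t₂`. -/ def r12 : R3 := X 0 + X 1
/-- `ρ₁₃ = t₁ + t₃`. -/ def r13 : R3 := X 0 + X 2
/-- `ρ₂₃ = t₂ + t₃`. -/ def r23 : R3 := X 1 + X 2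
/-- `ρ₁₂₃ = t₁ + t₂ + t₃`. -/ def r123 : R3 := X 0 + X 1 + X 2

/-- The localization term `f(A)/σ₄(A)` in `K` attached to a quadruple `A` of
elements of `R` and a polynomial `f` in 4 variables over `𝔽₂`. -/
def trm (A : Fin 4 → R3) (f : MvPolynomial (Fin 4) (ZMod 2)) : K3 :=
  toK3 (aeval A f) / toK3 (∏ i, A i)

/-! ### Auxiliary definitions -/

def uu1 : R3 := r12 * r23
def uu2 : R3 := r2 * r123
def uu3 : R3 := r1 * r3
def DD : R3 := r1 * r2 * r3 * r12 * r23 * r123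
def Av1 : Fin 4 → R3 := ![r1, r2, r3, r123]
def Av2 : Fin 4 → R3 := ![r1, r12, r23, r3]
def Av3 : Fin 4 → R3 := ![r2, r12, r23, r123]

/-- the common numerator -/
def NN (f : MvPolynomial (Fin 4) (ZMod 2)) : R3 :=
  aeval Av1 f * uu1 + aeval Av2 f * uu2 + aeval Av3 f * uu3

/-! ### Primality of linear forms -/

lemma primeX0 : Prime (X 0 : R3) := by
  rw [← MulEquiv.prime_iff (finSuccEquiv (ZMod 2) 2).toMulEquiv]
  simpa [finSuccEquiv_X_zero] using Polynomial.prime_X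

/-- the "kill `t₁`" homomorphism -/
def phi0 : R3 →ₐ[ZMod 2] R3 := aeval ![0, X 1, X 2]

lemma X0_dvd_sub (g : R3) : (X 0 : R3) ∣ g - phi0 g := by
  induction g using MvPolynomial.induction_on with
  | C a => simp [phi0]
  | add p q hp hq =>
      have h : p + q - phi0 (p + q) = (p - phi0 p) + (q - phi0 q) := by rw [map_add]; ring
      rw [h]; exact dvd_add hp hq
  | mul_X p i hp =>
      have hXi : phi0 (p * X i) = phi0 p * ![0, X 1, X 2] i := by
        rw [map_mul]; congr 1; simp [phi0]
      rw [hXi]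
      fin_cases i
      · simpa using Dvd.intro_left p rfl
      · have h : (p - phi0 p) * X 1 = p * X 1 - phi0 p * ![(0:R3), X 1, X 2] 1 := by
          simp; ring
        exact h ▸ hp.mul_right (X 1)
      · have h : (p - phi0 p) * X 2 = p * X 2 - phi0 p * ![(0:R3), X 1, X 2] 2 := by
          simp; ring
        exact h ▸ hp.mul_right (X 2)

lemma X0_dvd_of {g : R3} (h : phi0 g = 0) : (X 0 : R3) ∣ g := by
  have := X0_dvd_sub g; rwa [h, sub_zero] at this

lemma tau_prime (tau : R3 →ₐ[ZMod 2] R3) (hinv : ∀ x, tau (tau x) = x) :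
    Prime (tau (X 0)) := by
  let e : R3 ≃* R3 :=
    { toFun := tau, invFun := tau, left_inv := hinv, right_inv := hinv,
      map_mul' := map_mul tau }
  exact (MulEquiv.prime_iff (p := (X 0 : R3)) e).mpr primeX0

lemma line_dvd (tau : R3 →ₐ[ZMod 2] R3) (hinv : ∀ x, tau (tau x) = x) {g : R3}
    (h : phi0 (tau g) = 0) : tau (X 0) ∣ g := by
  have h2 := map_dvd tau (X0_dvd_of h)
  rwa [hinv] at h2


lemma two0 : (2:R3) = 0 := CharTwo.two_eq_zero
lemma three1 : (3:R3) = 1 := by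
  have h : (3:R3) = 2 + 1 := by norm_num
  rw [h, two0, zero_add]
lemma four0 : (4:R3) = 0 := by
  have h : (4:R3) = 2 * 2 := by norm_num
  rw [h, two0, zero_mul]

/-! ### The six involutions -/

def tau1 : R3 →ₐ[ZMod 2] R3 := aeval ![X 0, X 1, X 2]
def tau2 : R3 →ₐ[ZMod 2] R3 := aeval ![X 1, X 0, X 2]
def tau3 : R3 →ₐ[ZMod 2] R3 := aeval ![X 2, X 1, X 0]
def tau12 : R3 →ₐ[ZMod 2] R3 := aeval ![X 0 + X 1, X 1, X 2]
def tau23 : R3 →ₐ[ZMod 2] R3 := aeval ![X 1 + X 2, X 1, X 0 + X 1]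
def tau123 : R3 →ₐ[ZMod 2] R3 := aeval ![X 0 + X 1 + X 2, X 1, X 2]

lemma invol_of_comp {tau : R3 →ₐ[ZMod 2] R3} (h : tau.comp tau = AlgHom.id _ _) :
    ∀ x : R3, tau (tau x) = x := by
  intro x
  calc tau (tau x) = tau.comp tau x := rfl
  _ = x := by rw [h]; rfl

lemma tau1_invol : ∀ x : R3, tau1 (tau1 x) = x := by
  apply invol_of_comp
  apply MvPolynomial.algHom_ext; intro i
  fin_cases i <;> simp [tau1] <;> ring_nf <;> simp [two0, three1, four0, CharTwo.add_self_eq_zero]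

lemma tau2_invol : ∀ x : R3, tau2 (tau2 x) = x := by
  apply invol_of_comp
  apply MvPolynomial.algHom_ext; intro i
  fin_cases i <;> simp [tau2] <;> ring_nf <;> simp [two0, three1, four0, CharTwo.add_self_eq_zero]

lemma tau3_invol : ∀ x : R3, tau3 (tau3 x) = x := by
  apply invol_of_comp
  apply MvPolynomial.algHom_ext; intro i
  fin_cases i <;> simp [tau3] <;> ring_nf <;> simp [two0, three1, four0, CharTwo.add_self_eq_zero]

lemma tau12_invol : ∀ x : R3, tau12 (tau12 x) = x := by
  apply invol_of_comp
  apply MvPolynomial.algHom_ext; intro i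
  fin_cases i <;> simp [tau12] <;> ring_nf <;> simp [two0, three1, four0, CharTwo.add_self_eq_zero]

lemma tau23_invol : ∀ x : R3, tau23 (tau23 x) = x := by
  apply invol_of_comp
  apply MvPolynomial.algHom_ext; intro i
  fin_cases i <;> simp [tau23] <;> ring_nf <;> simp [two0, three1, four0, CharTwo.add_self_eq_zero]

lemma tau123_invol : ∀ x : R3, tau123 (tau123 x) = x := by
  apply invol_of_comp
  apply MvPolynomial.algHom_ext; intro i
  fin_cases i <;> simp [tau123] <;> ring_nf <;> simp [two0, three1, four0, CharTwo.add_self_eq_zero]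

/-! ### Generic helpers -/

lemma sum3_zero (ψ : R3 →ₐ[ZMod 2] R3) (x y z a b c : R3) (hxy : ψ x = ψ y)
    (hab : ψ a = ψ b) (hz : ψ c = 0) : ψ (x * a + y * b + z * c) = 0 := by
  simp only [map_add, map_mul, hxy, hab, hz, mul_zero, add_zero]
  exact CharTwo.add_self_eq_zero _

lemma aeval_perm {f : MvPolynomial (Fin 4) (ZMod 2)} (hf : f.IsSymmetric)
    (B : Fin 4 → R3) (e : Equiv.Perm (Fin 4)) :
    aeval (B ∘ e) f = aeval B f := by
  rw [← aeval_rename, hf e]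

lemma psi_zero_of_dvd (ψ : R3 →ₐ[ZMod 2] R3) {l g : R3} (hl : ψ l = 0) (h : l ∣ g) :
    ψ g = 0 := by
  obtain ⟨k, rfl⟩ := h; rw [map_mul, hl, zero_mul]

lemma ne_zero_of_eval_one {g : R3} (v : Fin 3 → ZMod 2) (h : eval v g = 1) : g ≠ 0 := by
  intro h0; rw [h0] at h; simp at h

lemma chain {p m n : R3} (hp : Prime p) (hm : m ∣ n) (hpn : p ∣ n) (hpm : ¬ p ∣ m) :
    p * m ∣ n := by
  obtain ⟨k, rfl⟩ := hm
  rcases hp.2.2 m k hpn with h | h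
  · exact absurd h hpm
  · obtain ⟨k', rfl⟩ := h
    exact ⟨k', by ring⟩

/-! ### The six linear forms divide `NN f` -/

variable {f : MvPolynomial (Fin 4) (ZMod 2)}

lemma dvd_r1 (hf : f.IsSymmetric) : r1 ∣ NN f := by
  have hψ : phi0 (tau1 (NN f)) = 0 := by
    show (phi0.comp tau1) (NN f) = 0
    rw [show NN f = aeval Av1 f * uu1 + aeval Av2 f * uu2 + aeval Av3 f * uu3 from rfl]
    apply sum3_zero
    · rw [comp_aeval_apply, comp_aeval_apply]
      have hv : (fun x => (phi0.comp tau1) (Av1 x))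
          = (fun x => (phi0.comp tau1) (Av2 x)) ∘ (Equiv.swap 2 3) := by
        funext x
        fin_cases x <;>
          simp [Av1, Av2, r1, r2, r3, r12, r23, r123, phi0, tau1, Equiv.swap_apply_def] <;>
          ring_nf <;> simp [two0, three1, four0, CharTwo.add_self_eq_zero]
      rw [hv]; exact aeval_perm hf _ _
    · simp [uu1, uu2, r12, r23, r2, r123, phi0, tau1]
      all_goals ring_nf
      all_goals simp [two0, three1, four0, CharTwo.add_self_eq_zero]
    · simp [uu3, r1, r3, phi0, tau1, CharTwo.add_self_eq_zero]
  have h := line_dvd tau1 tau1_invol hψ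
  have h0 : tau1 (X 0) = r1 := by simp [tau1, r1]
  rwa [h0] at h

lemma dvd_r2 (hf : f.IsSymmetric) : r2 ∣ NN f := by
  have hψ : phi0 (tau2 (NN f)) = 0 := by
    show (phi0.comp tau2) (NN f) = 0
    have hord : NN f = aeval Av1 f * uu1 + aeval Av3 f * uu3 + aeval Av2 f * uu2 := by
      show aeval Av1 f * uu1 + aeval Av2 f * uu2 + aeval Av3 f * uu3 = _; ring
    rw [hord]
    apply sum3_zero
    · rw [comp_aeval_apply, comp_aeval_apply]
      have hv : (fun x => (phi0.comp tau2) (Av1 x))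
          = (fun x => (phi0.comp tau2) (Av3 x)) ∘ (Equiv.swap 0 1) := by
        funext x
        fin_cases x <;>
          simp [Av1, Av3, r1, r2, r3, r12, r23, r123, phi0, tau2, Equiv.swap_apply_def] <;>
          ring_nf <;> simp [two0, three1, four0, CharTwo.add_self_eq_zero]
      rw [hv]; exact aeval_perm hf _ _
    · simp [uu1, uu3, r12, r23, r1, r3, phi0, tau2]
      all_goals ring_nf
      all_goals simp [two0, three1, four0, CharTwo.add_self_eq_zero]
    · simp [uu2, r2, r123, phi0, tau2, CharTwo.add_self_eq_zero]
  have h := line_dvd tau2 tau2_invol hψ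
  have h0 : tau2 (X 0) = r2 := by simp [tau2, r2]
  rwa [h0] at h

def perm3 : Equiv.Perm (Fin 4) :=
  ⟨![0, 2, 3, 1], ![0, 3, 1, 2], by intro x; fin_cases x <;> rfl, by intro x; fin_cases x <;> rfl⟩

lemma dvd_r3 (hf : f.IsSymmetric) : r3 ∣ NN f := by
  have hψ : phi0 (tau3 (NN f)) = 0 := by
    show (phi0.comp tau3) (NN f) = 0
    rw [show NN f = aeval Av1 f * uu1 + aeval Av2 f * uu2 + aeval Av3 f * uu3 from rfl]
    apply sum3_zero
    · rw [comp_aeval_apply, comp_aeval_apply]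
      have hv : (fun x => (phi0.comp tau3) (Av1 x))
          = (fun x => (phi0.comp tau3) (Av2 x)) ∘ perm3 := by
        funext x
        fin_cases x <;>
          simp [Av1, Av2, r1, r2, r3, r12, r23, r123, phi0, tau3, perm3] <;>
          ring_nf <;> simp [two0, three1, four0, CharTwo.add_self_eq_zero]
      rw [hv]; exact aeval_perm hf _ _
    · simp [uu1, uu2, r12, r23, r2, r123, phi0, tau3]
      all_goals ring_nf
      all_goals simp [two0, three1, four0, CharTwo.add_self_eq_zero]
    · simp [uu3, r1, r3, phi0, tau3, CharTwo.add_self_eq_zero]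
  have h := line_dvd tau3 tau3_invol hψ
  have h0 : tau3 (X 0) = r3 := by simp [tau3, r3]
  rwa [h0] at h

lemma dvd_r12 (hf : f.IsSymmetric) : r12 ∣ NN f := by
  have hψ : phi0 (tau12 (NN f)) = 0 := by
    show (phi0.comp tau12) (NN f) = 0
    have hord : NN f = aeval Av2 f * uu2 + aeval Av3 f * uu3 + aeval Av1 f * uu1 := by
      show aeval Av1 f * uu1 + aeval Av2 f * uu2 + aeval Av3 f * uu3 = _; ring
    rw [hord]
    apply sum3_zero
    · rw [comp_aeval_apply, comp_aeval_apply]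
      have hv : (fun x => (phi0.comp tau12) (Av2 x))
          = (fun x => (phi0.comp tau12) (Av3 x)) ∘ (Equiv.refl _) := by
        funext x
        fin_cases x <;>
          simp [Av2, Av3, r1, r2, r3, r12, r23, r123, phi0, tau12] <;>
          ring_nf <;> simp [two0, three1, four0, CharTwo.add_self_eq_zero]
      rw [hv]; exact aeval_perm hf _ _
    · simp [uu2, uu3, r2, r123, r1, r3, phi0, tau12]
      all_goals ring_nf
      all_goals simp [two0, three1, four0, CharTwo.add_self_eq_zero]
    · simp [uu1, r12, r23, phi0, tau12, CharTwo.add_self_eq_zero]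
  have h := line_dvd tau12 tau12_invol hψ
  have h0 : tau12 (X 0) = r12 := by simp [tau12, r12]
  rwa [h0] at h

lemma dvd_r23 (hf : f.IsSymmetric) : r23 ∣ NN f := by
  have hψ : phi0 (tau23 (NN f)) = 0 := by
    show (phi0.comp tau23) (NN f) = 0
    have hord : NN f = aeval Av2 f * uu2 + aeval Av3 f * uu3 + aeval Av1 f * uu1 := by
      show aeval Av1 f * uu1 + aeval Av2 f * uu2 + aeval Av3 f * uu3 = _; ring
    rw [hord]
    apply sum3_zero
    · rw [comp_aeval_apply, comp_aeval_apply]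
      have hv : (fun x => (phi0.comp tau23) (Av2 x))
          = (fun x => (phi0.comp tau23) (Av3 x)) ∘ (Equiv.swap 0 3) := by
        funext x
        fin_cases x <;>
          simp [Av2, Av3, r1, r2, r3, r12, r23, r123, phi0, tau23, Equiv.swap_apply_def] <;>
          ring_nf <;> simp [two0, three1, four0, CharTwo.add_self_eq_zero]
      rw [hv]; exact aeval_perm hf _ _
    · simp [uu2, uu3, r2, r123, r1, r3, phi0, tau23]
      all_goals ring_nf
      all_goals simp [two0, three1, four0, CharTwo.add_self_eq_zero]
    · simp [uu1, r12, r23, phi0, tau23, CharTwo.add_self_eq_zero]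
      all_goals ring_nf
      all_goals simp [two0, three1, four0, CharTwo.add_self_eq_zero]
  have h := line_dvd tau23 tau23_invol hψ
  have h0 : tau23 (X 0) = r23 := by simp [tau23, r23]
  rwa [h0] at h

def perm123 : Equiv.Perm (Fin 4) :=
  ⟨![2, 0, 1, 3], ![1, 2, 0, 3], by intro x; fin_cases x <;> rfl, by intro x; fin_cases x <;> rfl⟩

lemma dvd_r123 (hf : f.IsSymmetric) : r123 ∣ NN f := by
  have hψ : phi0 (tau123 (NN f)) = 0 := by
    show (phi0.comp tau123) (NN f) = 0
    have hord : NN f = aeval Av1 f * uu1 + aeval Av3 f * uu3 + aeval Av2 f * uu2 := by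
      show aeval Av1 f * uu1 + aeval Av2 f * uu2 + aeval Av3 f * uu3 = _; ring
    rw [hord]
    apply sum3_zero
    · rw [comp_aeval_apply, comp_aeval_apply]
      have hv : (fun x => (phi0.comp tau123) (Av1 x))
          = (fun x => (phi0.comp tau123) (Av3 x)) ∘ perm123 := by
        funext x
        fin_cases x <;>
          simp [Av1, Av3, r1, r2, r3, r12, r23, r123, phi0, tau123, perm123] <;>
          ring_nf <;> simp [two0, three1, four0, CharTwo.add_self_eq_zero]
      rw [hv]; exact aeval_perm hf _ _
    · simp [uu1, uu3, r12, r23, r1, r3, phi0, tau123]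
      all_goals ring_nf
      all_goals simp [two0, three1, four0, CharTwo.add_self_eq_zero]
    · simp [uu2, r2, r123, phi0, tau123, CharTwo.add_self_eq_zero]
      all_goals ring_nf
      all_goals simp [two0, three1, four0, CharTwo.add_self_eq_zero]
  have h := line_dvd tau123 tau123_invol hψ
  have h0 : tau123 (X 0) = r123 := by simp [tau123, r123]
  rwa [h0] at h

/-! ### Primes and the product divisibility -/

lemma prime_r1 : Prime r1 := by
  have h := tau_prime tau1 tau1_invol
  rwa [show tau1 (X 0) = r1 by simp [tau1, r1]] at h
lemma prime_r2 : Prime r2 := by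
  have h := tau_prime tau2 tau2_invol
  rwa [show tau2 (X 0) = r2 by simp [tau2, r2]] at h
lemma prime_r3 : Prime r3 := by
  have h := tau_prime tau3 tau3_invol
  rwa [show tau3 (X 0) = r3 by simp [tau3, r3]] at h
lemma prime_r12 : Prime r12 := by
  have h := tau_prime tau12 tau12_invol
  rwa [show tau12 (X 0) = r12 by simp [tau12, r12]] at h
lemma prime_r23 : Prime r23 := by
  have h := tau_prime tau23 tau23_invol
  rwa [show tau23 (X 0) = r23 by simp [tau23, r23]] at h
lemma prime_r123 : Prime r123 := by
  have h := tau_prime tau123 tau123_invol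
  rwa [show tau123 (X 0) = r123 by simp [tau123, r123]] at h

lemma hX12ne : (X 1 + X 2 : R3) ≠ 0 :=
  ne_zero_of_eval_one ![0, 1, 0] (by simp)

lemma nd2 : ¬ r2 ∣ r1 := by
  intro h
  have h0 := psi_zero_of_dvd (phi0.comp tau2)
    (show (phi0.comp tau2) r2 = 0 by simp [r2, tau2, phi0]) h
  simp [r1, tau2, phi0, X_ne_zero] at h0

lemma nd3 : ¬ r3 ∣ r2 * r1 := by
  intro h
  have h0 := psi_zero_of_dvd (phi0.comp tau3)
    (show (phi0.comp tau3) r3 = 0 by simp [r3, tau3, phi0]) h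
  simp [r1, r2, tau3, phi0, X_ne_zero] at h0

lemma nd12 : ¬ r12 ∣ r3 * (r2 * r1) := by
  intro h
  have h0 := psi_zero_of_dvd (phi0.comp tau12)
    (show (phi0.comp tau12) r12 = 0 by
      simp [r12, tau12, phi0, CharTwo.add_self_eq_zero]) h
  simp [r1, r2, r3, tau12, phi0, X_ne_zero] at h0

lemma nd23 : ¬ r23 ∣ r12 * (r3 * (r2 * r1)) := by
  intro h
  have h0 := psi_zero_of_dvd (phi0.comp tau23)
    (show (phi0.comp tau23) r23 = 0 by
      simp [r23, tau23, phi0, CharTwo.add_self_eq_zero]) h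
  have hm : (phi0.comp tau23) (r12 * (r3 * (r2 * r1)))
      = X 2 * (X 1 * (X 1 * (X 1 + X 2))) := by
    simp [r1, r2, r3, r12, tau23, phi0]
    ring_nf
    simp [two0, three1, four0]
  rw [hm] at h0
  simp [X_ne_zero, hX12ne] at h0

lemma nd123 : ¬ r123 ∣ r23 * (r12 * (r3 * (r2 * r1))) := by
  intro h
  have h0 := psi_zero_of_dvd (phi0.comp tau123)
    (show (phi0.comp tau123) r123 = 0 by
      simp [r123, tau123, phi0]
      ring_nf
      simp [two0, three1, four0]) h
  have hm : (phi0.comp tau123) (r23 * (r12 * (r3 * (r2 * r1))))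
      = (X 1 + X 2) * (X 2 * (X 2 * (X 1 * (X 1 + X 2)))) := by
    simp [r1, r2, r3, r12, r23, tau123, phi0]
    ring_nf
    simp [two0, three1, four0]
  rw [hm] at h0
  simp [X_ne_zero, hX12ne] at h0

lemma DD_dvd {f : MvPolynomial (Fin 4) (ZMod 2)} (hf : f.IsSymmetric) : DD ∣ NN f := by
  have c2 : r2 * r1 ∣ NN f := chain prime_r2 (dvd_r1 hf) (dvd_r2 hf) nd2
  have c3 : r3 * (r2 * r1) ∣ NN f := chain prime_r3 c2 (dvd_r3 hf) nd3
  have c4 : r12 * (r3 * (r2 * r1)) ∣ NN f := chain prime_r12 c3 (dvd_r12 hf) nd12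
  have c5 : r23 * (r12 * (r3 * (r2 * r1))) ∣ NN f := chain prime_r23 c4 (dvd_r23 hf) nd23
  have c6 : r123 * (r23 * (r12 * (r3 * (r2 * r1)))) ∣ NN f :=
    chain prime_r123 c5 (dvd_r123 hf) nd123
  have hDD : DD = r123 * (r23 * (r12 * (r3 * (r2 * r1)))) := by unfold DD; ring
  rw [hDD]; exact c6

/-! ### Main theorem -/

/-- for the three quadruples `A₁ = (ρ₁,ρ₂,ρ₃,ρ₁₂₃)`,
`A₂ = (ρ₁,ρ₁₂,ρ₂₃,ρ₃)`, `A₃ = (ρ₂,ρ₁₂,ρ₂₃,ρ₁₂₃)` and every symmetric polynomial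
`f` over `𝔽₂` in 4 variables, `∑ᵢ f(Aᵢ)/σ₄(Aᵢ)` lies in the image of `R` in `K`. -/
theorem stmt_12 :
    ∀ f : MvPolynomial (Fin 4) (ZMod 2), f.IsSymmetric →
      ∃ r : R3,
        trm ![r1, r2, r3, r123] f + trm ![r1, r12, r23, r3] f +
          trm ![r2, r12, r23, r123] f = toK3 r := by
  intro f hf
  obtain ⟨c, hc⟩ := DD_dvd hf
  refine ⟨c, ?_⟩
  have hr1 : r1 ≠ 0 := ne_zero_of_eval_one ![1, 0, 0] (by simp [r1])
  have hr2 : r2 ≠ 0 := ne_zero_of_eval_one ![0, 1, 0] (by simp [r2])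
  have hr3 : r3 ≠ 0 := ne_zero_of_eval_one ![0, 0, 1] (by simp [r3])
  have hr12 : r12 ≠ 0 := ne_zero_of_eval_one ![1, 0, 0] (by simp [r12])
  have hr23 : r23 ≠ 0 := ne_zero_of_eval_one ![0, 1, 0] (by simp [r23])
  have hr123 : r123 ≠ 0 := ne_zero_of_eval_one ![1, 0, 0] (by simp [r123])
  have hDD0 : DD ≠ 0 := by
    unfold DD
    exact mul_ne_zero (mul_ne_zero (mul_ne_zero (mul_ne_zero (mul_ne_zero hr1 hr2) hr3)
      hr12) hr23) hr123
  have hs1 : r1 * r2 * r3 * r123 ≠ 0 :=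
    mul_ne_zero (mul_ne_zero (mul_ne_zero hr1 hr2) hr3) hr123
  have hs2 : r1 * r12 * r23 * r3 ≠ 0 :=
    mul_ne_zero (mul_ne_zero (mul_ne_zero hr1 hr12) hr23) hr3
  have hs3 : r2 * r12 * r23 * r123 ≠ 0 :=
    mul_ne_zero (mul_ne_zero (mul_ne_zero hr2 hr12) hr23) hr123
  have hinj : Function.Injective toK3 := IsFractionRing.injective R3 K3
  have hKD : toK3 DD ≠ 0 := (map_ne_zero_iff toK3 hinj).mpr hDD0
  have e1 : trm ![r1, r2, r3, r123] f = toK3 (aeval Av1 f * uu1) / toK3 DD := by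
    unfold trm
    rw [show (∏ i, (![r1, r2, r3, r123]) i) = r1 * r2 * r3 * r123 by
      rw [Fin.prod_univ_four]; simp]
    rw [div_eq_div_iff ((map_ne_zero_iff toK3 hinj).mpr hs1) hKD, ← map_mul, ← map_mul]
    congr 1
    show aeval Av1 f * DD = aeval Av1 f * uu1 * (r1 * r2 * r3 * r123)
    unfold DD uu1; ring
  have e2 : trm ![r1, r12, r23, r3] f = toK3 (aeval Av2 f * uu2) / toK3 DD := by
    unfold trm
    rw [show (∏ i, (![r1, r12, r23, r3]) i) = r1 * r12 * r23 * r3 by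
      rw [Fin.prod_univ_four]; simp]
    rw [div_eq_div_iff ((map_ne_zero_iff toK3 hinj).mpr hs2) hKD, ← map_mul, ← map_mul]
    congr 1
    show aeval Av2 f * DD = aeval Av2 f * uu2 * (r1 * r12 * r23 * r3)
    unfold DD uu2; ring
  have e3 : trm ![r2, r12, r23, r123] f = toK3 (aeval Av3 f * uu3) / toK3 DD := by
    unfold trm
    rw [show (∏ i, (![r2, r12, r23, r123]) i) = r2 * r12 * r23 * r123 by
      rw [Fin.prod_univ_four]; simp]
    rw [div_eq_div_iff ((map_ne_zero_iff toK3 hinj).mpr hs3) hKD, ← map_mul, ← map_mul]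
    congr 1
    show aeval Av3 f * DD = aeval Av3 f * uu3 * (r2 * r12 * r23 * r123)
    unfold DD uu3; ring
  rw [e1, e2, e3, ← add_div, ← add_div, ← map_add, ← map_add]
  rw [show aeval Av1 f * uu1 + aeval Av2 f * uu2 + aeval Av3 f * uu3 = NN f from rfl, hc]
  rw [map_mul, mul_div_cancel_left₀ _ hKD]

end
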